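/- (q-Vandermonde-type convolution used in the proof of the kernel theorem) For a positive integer s and non-negative integers u, one has the identity of formal power series: Σ_{m ≥ 0} q^m/(q;q)_{s+m} · qbinom(s+m−1, m−u) = Σ_{m ≥ 0} q^{(m−u)(s+m)+m}/(q;q)_{s+m}² · qbinom(s+m−1, m−u). -/

import Mathlib

/-- The finite q-Pochhammer symbol `(q;q)_N = Π_{j=1}^{N} (1 − q^j)` as a formal power
series in `q` over `ℚ`. -/
noncomputable def qp (N : ℕ) : PowerSeries ℚ :=
  ∏ j ∈ Finset.Icc 1 N, (1 - (PowerSeries.X : PowerSeries ℚ) ^ j)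

/-- The Gaussian binomial coefficient `qbinom n k = (q;q)_n / ((q;q)_k (q;q)_{n−k})`,
equal to `0` when `k > n`. -/
noncomputable def qbinom (n k : ℕ) : PowerSeries ℚ :=
  if k ≤ n then qp n * (qp k)⁻¹ * (qp (n - k))⁻¹ else 0

namespace QVC

open PowerSeries Finset

abbrev PS := PowerSeries ℚ
abbrev FK := FractionRing (PowerSeries ℚ)

noncomputable def φ : PowerSeries ℚ →+* FK := algebraMap (PowerSeries ℚ) FK

lemma φ_inj : Function.Injective φ := IsFractionRing.injective (PowerSeries ℚ) FK

lemma cc_qp (N : ℕ) : PowerSeries.constantCoeff (R := ℚ) (qp N) = 1 := by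
  unfold qp
  rw [map_prod]
  refine Finset.prod_eq_one fun j hj => ?_
  have hj1 : j ≠ 0 := by have := (Finset.mem_Icc.mp hj).1; omega
  simp [zero_pow hj1]

lemma cc_osx (m : ℕ) (hm : m ≠ 0) :
    PowerSeries.constantCoeff (R := ℚ) (1 - (PowerSeries.X : PS) ^ m) = 1 := by
  simp [zero_pow hm]

lemma cc_prod {f g : PS} (hf : PowerSeries.constantCoeff (R := ℚ) f = 1)
    (hg : PowerSeries.constantCoeff (R := ℚ) g = 1) :
    PowerSeries.constantCoeff (R := ℚ) (f * g) = 1 := by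
  rw [map_mul, hf, hg, one_mul]

lemma ne_of_cc {f : PS} (hf : PowerSeries.constantCoeff (R := ℚ) f = 1) : f ≠ 0 := by
  intro h
  rw [h, map_zero] at hf
  exact zero_ne_one hf

lemma qp_ne (N : ℕ) : qp N ≠ 0 := ne_of_cc (cc_qp N)

lemma osx_ne (m : ℕ) (hm : m ≠ 0) : (1 - (PowerSeries.X : PS) ^ m) ≠ 0 :=
  ne_of_cc (cc_osx m hm)

lemma φ_inv (f : PS) (hf : PowerSeries.constantCoeff (R := ℚ) f ≠ 0) : φ f⁻¹ = (φ f)⁻¹ := by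
  have h1 : φ f * φ f⁻¹ = 1 := by
    rw [← map_mul, PowerSeries.mul_inv_cancel f hf, map_one]
  exact (inv_eq_of_mul_eq_one_right h1).symm

lemma φ_invc (f : PS) (hf : PowerSeries.constantCoeff (R := ℚ) f = 1) : φ f⁻¹ = (φ f)⁻¹ :=
  φ_inv f (by rw [hf]; exact one_ne_zero)

lemma φ_ne {f : PS} (hf : f ≠ 0) : φ f ≠ 0 := fun h => hf (φ_inj (by rw [h, map_zero]))

lemma φ_qp_ne (N : ℕ) : φ (qp N) ≠ 0 := φ_ne (qp_ne N)

lemma φ_inv_qp (N : ℕ) : φ (qp N)⁻¹ = (φ (qp N))⁻¹ := φ_invc _ (cc_qp N)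

lemma φ_osx_ne (m : ℕ) (hm : m ≠ 0) : (1 : FK) - φ PowerSeries.X ^ m ≠ 0 := by
  have h : (1 : FK) - φ PowerSeries.X ^ m = φ (1 - PowerSeries.X ^ m) := by
    rw [map_sub, map_one, map_pow]
  rw [h]
  exact φ_ne (osx_ne m hm)

lemma φ_inv_osx (m : ℕ) (hm : m ≠ 0) :
    φ (1 - PowerSeries.X ^ m)⁻¹ = ((1 : FK) - φ PowerSeries.X ^ m)⁻¹ := by
  rw [φ_invc _ (cc_osx m hm), map_sub, map_one, map_pow]

lemma qp_succ (N : ℕ) : qp (N + 1) = qp N * (1 - PowerSeries.X ^ (N + 1)) := by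
  unfold qp
  exact Finset.prod_Icc_succ_top (by omega) _

lemma qp_succ2 (N : ℕ) :
    qp (N + 2) = qp N * (1 - PowerSeries.X ^ (N + 1)) * (1 - PowerSeries.X ^ (N + 2)) := by
  rw [show N + 2 = N + 1 + 1 by omega, qp_succ (N + 1), qp_succ N]

lemma φ_qp_succ (N : ℕ) :
    φ (qp (N + 1)) = φ (qp N) * ((1 : FK) - φ PowerSeries.X ^ (N + 1)) := by
  rw [qp_succ, map_mul, map_sub, map_one, map_pow]

lemma qp_zero : qp 0 = 1 := by
  unfold qp
  simp

lemma inv_split {f g : PS} (hf : PowerSeries.constantCoeff (R := ℚ) f = 1)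
    (hg : PowerSeries.constantCoeff (R := ℚ) g = 1) : (f * g)⁻¹ = f⁻¹ * g⁻¹ := by
  apply φ_inj
  rw [map_mul, φ_invc _ (cc_prod hf hg), φ_invc _ hf, φ_invc _ hg, map_mul, mul_inv]

/-! ### The two families and the telescoping certificates -/

noncomputable def a (n k : ℕ) : PS :=
  PowerSeries.X ^ k * (qp k * (1 - PowerSeries.X ^ (n + k)))⁻¹

noncomputable def b (n k : ℕ) : PS :=
  PowerSeries.X ^ (k * (n + k + 1)) *
    (qp k * qp (n + k) * (1 - PowerSeries.X ^ (n + k)))⁻¹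

noncomputable def ga (n k : ℕ) : PS :=
  PowerSeries.X ^ (n + k) *
    (((1 - PowerSeries.X) * (1 - PowerSeries.X ^ k)) *
      (qp k * (1 - PowerSeries.X ^ (n + k)) * (1 - PowerSeries.X ^ (n + k + 1)))⁻¹)

noncomputable def gb (n k : ℕ) : PS :=
  PowerSeries.X ^ (k * (n + k + 1)) *
    (((PowerSeries.X ^ n * (1 - PowerSeries.X ^ (n + k + 1)) ^ 2 -
        (1 - PowerSeries.X ^ (n + k))) * (1 - PowerSeries.X ^ k)) *
      (qp k * qp (n + k) * (1 - PowerSeries.X ^ (n + k)) *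
        (1 - PowerSeries.X ^ (n + k + 1)) * (1 - PowerSeries.X ^ (n + k + 1)))⁻¹)

lemma ga_zero (n : ℕ) : ga n 0 = 0 := by
  simp [ga]

lemma gb_zero (n : ℕ) : gb n 0 = 0 := by
  simp [gb]

set_option maxHeartbeats 2000000 in
lemma keyA {K : Type*} [Field K] (x al be Qk : K) (hQ : Qk ≠ 0)
    (h1 : 1 - al * be ≠ 0) (h2 : 1 - al * be * x ≠ 0) (h3 : 1 - al * be * x ^ 2 ≠ 0)
    (h4 : 1 - be * x ≠ 0) :
    be * (Qk * (1 - al * be))⁻¹ + al * x * (be * (Qk * (1 - al * be * x))⁻¹) +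
        al * x * (be * (Qk * (1 - al * be * x))⁻¹) +
        al * be * ((1 - x) * (1 - be) *
          (Qk * (1 - al * be) * (1 - al * be * x))⁻¹) =
      be * (Qk * (1 - al * be * x))⁻¹ + al * (be * (Qk * (1 - al * be))⁻¹) +
        al * x ^ 2 * (be * (Qk * (1 - al * be * x ^ 2))⁻¹) +
        al * be * x * ((1 - x) * (1 - be * x) *
          (Qk * (1 - be * x) * (1 - al * be * x) * (1 - al * be * x ^ 2))⁻¹) := by
  have d1 : Qk * (1 - al * be) ≠ 0 := mul_ne_zero hQ h1
  have d2 : Qk * (1 - al * be * x) ≠ 0 := mul_ne_zero hQ h2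
  have d3 : Qk * (1 - al * be) * (1 - al * be * x) ≠ 0 := mul_ne_zero d1 h2
  have d4 : Qk * (1 - al * be * x ^ 2) ≠ 0 := mul_ne_zero hQ h3
  have d5 : Qk * (1 - be * x) * (1 - al * be * x) * (1 - al * be * x ^ 2) ≠ 0 :=
    mul_ne_zero (mul_ne_zero (mul_ne_zero hQ h4) h2) h3
  simp only [← div_eq_mul_inv, mul_div_assoc']
  rw [div_add_div _ _ d1 d2, div_add_div _ _ (mul_ne_zero d1 d2) d2,
    div_add_div _ _ (mul_ne_zero (mul_ne_zero d1 d2) d2) d3,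
    div_add_div _ _ d2 d1, div_add_div _ _ (mul_ne_zero d2 d1) d4,
    div_add_div _ _ (mul_ne_zero (mul_ne_zero d2 d1) d4) d5,
    div_eq_div_iff (mul_ne_zero (mul_ne_zero (mul_ne_zero d1 d2) d2) d3)
      (mul_ne_zero (mul_ne_zero (mul_ne_zero d2 d1) d4) d5)]
  ring

set_option maxHeartbeats 4000000 in
lemma keyB {K : Type*} [Field K] (x al be g Qk Qnk : K) (hQ : Qk ≠ 0) (hQn : Qnk ≠ 0)
    (h1 : 1 - al * be ≠ 0) (h2 : 1 - al * be * x ≠ 0) (h3 : 1 - al * be * x ^ 2 ≠ 0)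
    (h4 : 1 - be * x ≠ 0) :
    g * (Qk * Qnk * (1 - al * be))⁻¹ +
        al * x * (g * be * (Qk * (Qnk * (1 - al * be * x)) * (1 - al * be * x))⁻¹) +
        al * x * (g * be * (Qk * (Qnk * (1 - al * be * x)) * (1 - al * be * x))⁻¹) +
        g * ((al * (1 - al * be * x) ^ 2 - (1 - al * be)) * (1 - be) *
          (Qk * Qnk * (1 - al * be) * (1 - al * be * x) * (1 - al * be * x))⁻¹) =
      g * be * (Qk * (Qnk * (1 - al * be * x)) * (1 - al * be * x))⁻¹ +
        al * (g * (Qk * Qnk * (1 - al * be))⁻¹) +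
        al * x ^ 2 * (g * be * be *
          (Qk * (Qnk * (1 - al * be * x) * (1 - al * be * x ^ 2)) * (1 - al * be * x ^ 2))⁻¹) +
        g * (al * be * be * x ^ 2) * ((al * (1 - al * be * x ^ 2) ^ 2 - (1 - al * be * x)) *
          (1 - be * x) *
          (Qk * (1 - be * x) * (Qnk * (1 - al * be * x)) * (1 - al * be * x) *
            (1 - al * be * x ^ 2) * (1 - al * be * x ^ 2))⁻¹) := by
  have d1 : Qk * Qnk * (1 - al * be) ≠ 0 := mul_ne_zero (mul_ne_zero hQ hQn) h1
  have d2 : Qk * (Qnk * (1 - al * be * x)) * (1 - al * be * x) ≠ 0 :=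
    mul_ne_zero (mul_ne_zero hQ (mul_ne_zero hQn h2)) h2
  have d3 : Qk * Qnk * (1 - al * be) * (1 - al * be * x) * (1 - al * be * x) ≠ 0 :=
    mul_ne_zero (mul_ne_zero d1 h2) h2
  have d4 : Qk * (Qnk * (1 - al * be * x) * (1 - al * be * x ^ 2)) * (1 - al * be * x ^ 2) ≠ 0 :=
    mul_ne_zero (mul_ne_zero hQ (mul_ne_zero (mul_ne_zero hQn h2) h3)) h3
  have d5 : Qk * (1 - be * x) * (Qnk * (1 - al * be * x)) * (1 - al * be * x) *
      (1 - al * be * x ^ 2) * (1 - al * be * x ^ 2) ≠ 0 :=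
    mul_ne_zero (mul_ne_zero (mul_ne_zero (mul_ne_zero (mul_ne_zero hQ h4)
      (mul_ne_zero hQn h2)) h2) h3) h3
  simp only [← div_eq_mul_inv, mul_div_assoc']
  rw [div_add_div _ _ d1 d2, div_add_div _ _ (mul_ne_zero d1 d2) d2,
    div_add_div _ _ (mul_ne_zero (mul_ne_zero d1 d2) d2) d3,
    div_add_div _ _ d2 d1, div_add_div _ _ (mul_ne_zero d2 d1) d4,
    div_add_div _ _ (mul_ne_zero (mul_ne_zero d2 d1) d4) d5,
    div_eq_div_iff (mul_ne_zero (mul_ne_zero (mul_ne_zero d1 d2) d2) d3)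
      (mul_ne_zero (mul_ne_zero (mul_ne_zero d2 d1) d4) d5)]
  ring

set_option maxHeartbeats 2000000 in
lemma recA (n k : ℕ) (hn : 1 ≤ n) :
    a n k + PowerSeries.X ^ (n + 1) * a (n + 1) k + PowerSeries.X ^ (n + 1) * a (n + 1) k
        + ga n k =
      a (n + 1) k + PowerSeries.X ^ n * a n k + PowerSeries.X ^ (n + 2) * a (n + 2) k
        + ga n (k + 1) := by
  unfold a ga
  rw [show n + 1 + k = n + k + 1 by omega, show n + 2 + k = n + k + 2 by omega,
    show n + (k + 1) = n + k + 1 by omega, show n + k + 1 + 1 = n + k + 2 by omega,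
    qp_succ k]
  apply φ_inj
  simp only [map_add, map_mul, map_sub, map_one, map_pow]
  rw [φ_invc (qp k * (1 - PowerSeries.X ^ (n + k)))
      (cc_prod (cc_qp k) (cc_osx _ (by omega))),
    φ_invc (qp k * (1 - PowerSeries.X ^ (n + k + 1)))
      (cc_prod (cc_qp k) (cc_osx _ (by omega))),
    φ_invc (qp k * (1 - PowerSeries.X ^ (n + k + 2)))
      (cc_prod (cc_qp k) (cc_osx _ (by omega))),
    φ_invc (qp k * (1 - PowerSeries.X ^ (n + k)) * (1 - PowerSeries.X ^ (n + k + 1)))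
      (cc_prod (cc_prod (cc_qp k) (cc_osx _ (by omega))) (cc_osx _ (by omega))),
    φ_invc (qp k * (1 - PowerSeries.X ^ (k + 1)) * (1 - PowerSeries.X ^ (n + k + 1)) *
        (1 - PowerSeries.X ^ (n + k + 2)))
      (cc_prod (cc_prod (cc_prod (cc_qp k) (cc_osx _ (by omega))) (cc_osx _ (by omega)))
        (cc_osx _ (by omega)))]
  have hx1 : (1 : FK) - φ PowerSeries.X ^ n * φ PowerSeries.X ^ k ≠ 0 := by
    have := φ_osx_ne (n + k) (by omega); simpa [pow_add, pow_one] using this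
  have hx2 : (1 : FK) - φ PowerSeries.X ^ n * φ PowerSeries.X ^ k * φ PowerSeries.X ≠ 0 := by
    have := φ_osx_ne (n + k + 1) (by omega); simpa [pow_add, pow_one] using this
  have hx3 : (1 : FK) - φ PowerSeries.X ^ n * φ PowerSeries.X ^ k * φ PowerSeries.X ^ 2 ≠ 0 := by
    have := φ_osx_ne (n + k + 2) (by omega); simpa [pow_add, pow_one] using this
  have hk1 : (1 : FK) - φ PowerSeries.X ^ k * φ PowerSeries.X ≠ 0 := by
    have := φ_osx_ne (k + 1) (by omega); simpa [pow_add, pow_one] using this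
  simp only [map_add, map_mul, map_sub, map_pow, map_one]
  simp only [pow_add, pow_one]
  linear_combination keyA (φ PowerSeries.X) (φ PowerSeries.X ^ n) (φ PowerSeries.X ^ k)
    (φ (qp k)) (φ_qp_ne k) hx1 hx2 hx3 hk1

set_option maxHeartbeats 4000000 in
lemma recB (n k : ℕ) (hn : 1 ≤ n) :
    b n k + PowerSeries.X ^ (n + 1) * b (n + 1) k + PowerSeries.X ^ (n + 1) * b (n + 1) k
        + gb n k =
      b (n + 1) k + PowerSeries.X ^ n * b n k + PowerSeries.X ^ (n + 2) * b (n + 2) k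
        + gb n (k + 1) := by
  unfold b gb
  rw [show k * (n + 1 + k + 1) = k * (n + k + 1) + k by ring,
    show k * (n + 2 + k + 1) = k * (n + k + 1) + k + k by ring,
    show (k + 1) * (n + (k + 1) + 1) = k * (n + k + 1) + (n + k + k + 2) by ring,
    show n + 1 + k = n + k + 1 by omega, show n + 2 + k = n + k + 2 by omega,
    show n + (k + 1) = n + k + 1 by omega, show n + k + 1 + 1 = n + k + 2 by omega,
    qp_succ (n + k), qp_succ2 (n + k), qp_succ k]
  apply φ_inj
  simp only [map_add, map_mul, map_sub, map_one, map_pow]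
  rw [φ_invc (qp k * qp (n + k) * (1 - PowerSeries.X ^ (n + k)))
      (cc_prod (cc_prod (cc_qp k) (cc_qp (n + k))) (cc_osx _ (by omega))),
    φ_invc (qp k * (qp (n + k) * (1 - PowerSeries.X ^ (n + k + 1))) *
        (1 - PowerSeries.X ^ (n + k + 1)))
      (cc_prod (cc_prod (cc_qp k) (cc_prod (cc_qp (n + k)) (cc_osx _ (by omega))))
        (cc_osx _ (by omega))),
    φ_invc (qp k * (qp (n + k) * (1 - PowerSeries.X ^ (n + k + 1)) *
        (1 - PowerSeries.X ^ (n + k + 2))) * (1 - PowerSeries.X ^ (n + k + 2)))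
      (cc_prod (cc_prod (cc_qp k) (cc_prod (cc_prod (cc_qp (n + k)) (cc_osx _ (by omega)))
        (cc_osx _ (by omega)))) (cc_osx _ (by omega))),
    φ_invc (qp k * qp (n + k) * (1 - PowerSeries.X ^ (n + k)) *
        (1 - PowerSeries.X ^ (n + k + 1)) * (1 - PowerSeries.X ^ (n + k + 1)))
      (cc_prod (cc_prod (cc_prod (cc_prod (cc_qp k) (cc_qp (n + k))) (cc_osx _ (by omega)))
        (cc_osx _ (by omega))) (cc_osx _ (by omega))),
    φ_invc (qp k * (1 - PowerSeries.X ^ (k + 1)) *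
        (qp (n + k) * (1 - PowerSeries.X ^ (n + k + 1))) * (1 - PowerSeries.X ^ (n + k + 1)) *
        (1 - PowerSeries.X ^ (n + k + 2)) * (1 - PowerSeries.X ^ (n + k + 2)))
      (cc_prod (cc_prod (cc_prod (cc_prod (cc_prod (cc_qp k) (cc_osx _ (by omega)))
        (cc_prod (cc_qp (n + k)) (cc_osx _ (by omega)))) (cc_osx _ (by omega)))
        (cc_osx _ (by omega))) (cc_osx _ (by omega)))]
  have hx1 : (1 : FK) - φ PowerSeries.X ^ n * φ PowerSeries.X ^ k ≠ 0 := by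
    have := φ_osx_ne (n + k) (by omega); simpa [pow_add, pow_one] using this
  have hx2 : (1 : FK) - φ PowerSeries.X ^ n * φ PowerSeries.X ^ k * φ PowerSeries.X ≠ 0 := by
    have := φ_osx_ne (n + k + 1) (by omega); simpa [pow_add, pow_one] using this
  have hx3 : (1 : FK) - φ PowerSeries.X ^ n * φ PowerSeries.X ^ k * φ PowerSeries.X ^ 2 ≠ 0 := by
    have := φ_osx_ne (n + k + 2) (by omega); simpa [pow_add, pow_one] using this
  have hk1 : (1 : FK) - φ PowerSeries.X ^ k * φ PowerSeries.X ≠ 0 := by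
    have := φ_osx_ne (k + 1) (by omega); simpa [pow_add, pow_one] using this
  simp only [map_add, map_mul, map_sub, map_pow, map_one]
  simp only [pow_add, pow_one]
  linear_combination keyB (φ PowerSeries.X) (φ PowerSeries.X ^ n) (φ PowerSeries.X ^ k)
    (φ PowerSeries.X ^ (k * (n + k + 1))) (φ (qp k)) (φ (qp (n + k)))
    (φ_qp_ne k) (φ_qp_ne (n + k)) hx1 hx2 hx3 hk1

/-! ### Partial sums and the summed recurrences -/

noncomputable def SA (n K : ℕ) : PS := ∑ k ∈ Finset.range (K + 1), a n k

noncomputable def SB (n K : ℕ) : PS := ∑ k ∈ Finset.range (K + 1), b n k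

lemma sumrecA (n K : ℕ) (hn : 1 ≤ n) :
    SA n K + PowerSeries.X ^ (n + 1) * SA (n + 1) K + PowerSeries.X ^ (n + 1) * SA (n + 1) K =
      SA (n + 1) K + PowerSeries.X ^ n * SA n K + PowerSeries.X ^ (n + 2) * SA (n + 2) K
        + ga n (K + 1) := by
  have tele : ∑ k ∈ Finset.range (K + 1), (ga n (k + 1) - ga n k) = ga n (K + 1) := by
    rw [Finset.sum_range_sub (ga n), ga_zero, sub_zero]
  have hsum : ∑ k ∈ Finset.range (K + 1),
      (a n k + PowerSeries.X ^ (n + 1) * a (n + 1) k + PowerSeries.X ^ (n + 1) * a (n + 1) k) =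
      ∑ k ∈ Finset.range (K + 1),
        (a (n + 1) k + PowerSeries.X ^ n * a n k + PowerSeries.X ^ (n + 2) * a (n + 2) k
          + (ga n (k + 1) - ga n k)) :=
    Finset.sum_congr rfl fun k _ => by linear_combination recA n k hn
  unfold SA
  rw [Finset.mul_sum, Finset.mul_sum, Finset.mul_sum, ← Finset.sum_add_distrib,
    ← Finset.sum_add_distrib, hsum, Finset.sum_add_distrib, Finset.sum_add_distrib,
    Finset.sum_add_distrib, tele, ← Finset.mul_sum, ← Finset.mul_sum]

lemma sumrecB (n K : ℕ) (hn : 1 ≤ n) :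
    SB n K + PowerSeries.X ^ (n + 1) * SB (n + 1) K + PowerSeries.X ^ (n + 1) * SB (n + 1) K =
      SB (n + 1) K + PowerSeries.X ^ n * SB n K + PowerSeries.X ^ (n + 2) * SB (n + 2) K
        + gb n (K + 1) := by
  have tele : ∑ k ∈ Finset.range (K + 1), (gb n (k + 1) - gb n k) = gb n (K + 1) := by
    rw [Finset.sum_range_sub (gb n), gb_zero, sub_zero]
  have hsum : ∑ k ∈ Finset.range (K + 1),
      (b n k + PowerSeries.X ^ (n + 1) * b (n + 1) k + PowerSeries.X ^ (n + 1) * b (n + 1) k) =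
      ∑ k ∈ Finset.range (K + 1),
        (b (n + 1) k + PowerSeries.X ^ n * b n k + PowerSeries.X ^ (n + 2) * b (n + 2) k
          + (gb n (k + 1) - gb n k)) :=
    Finset.sum_congr rfl fun k _ => by linear_combination recB n k hn
  unfold SB
  rw [Finset.mul_sum, Finset.mul_sum, Finset.mul_sum, ← Finset.sum_add_distrib,
    ← Finset.sum_add_distrib, hsum, Finset.sum_add_distrib, Finset.sum_add_distrib,
    Finset.sum_add_distrib, tele, ← Finset.mul_sum, ← Finset.mul_sum]

/-! ### Coefficient kill and stabilization -/

lemma coeff_killed {m N : ℕ} (f : PS) (h : N < m) :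
    PowerSeries.coeff (R := ℚ) N (PowerSeries.X ^ m * f) = 0 := by
  rw [PowerSeries.coeff_X_pow_mul', if_neg (by omega)]

lemma coeff_shift {m N : ℕ} (f : PS) (h : m ≤ N) :
    PowerSeries.coeff (R := ℚ) N (PowerSeries.X ^ m * f) = PowerSeries.coeff (R := ℚ) (N - m) f := by
  rw [PowerSeries.coeff_X_pow_mul', if_pos h]

lemma coeff_a_zero {n k N : ℕ} (h : N < k) : PowerSeries.coeff (R := ℚ) N (a n k) = 0 :=
  coeff_killed _ h

lemma coeff_b_zero {n k N : ℕ} (h : N < k) : PowerSeries.coeff (R := ℚ) N (b n k) = 0 := by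
  refine coeff_killed _ ?_
  have : k ≤ k * (n + k + 1) := Nat.le_mul_of_pos_right k (by omega)
  omega

lemma coeff_SA_stab (n N K : ℕ) (h : N ≤ K) :
    PowerSeries.coeff (R := ℚ) N (SA n K) = PowerSeries.coeff (R := ℚ) N (SA n N) := by
  unfold SA
  rw [Finset.range_eq_Ico, ← Finset.sum_Ico_consecutive _ (by omega : 0 ≤ N + 1)
    (by omega : N + 1 ≤ K + 1), map_add, ← Finset.range_eq_Ico]
  have h2 : PowerSeries.coeff (R := ℚ) N (∑ k ∈ Finset.Ico (N + 1) (K + 1), a n k) = 0 := by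
    rw [map_sum]
    refine Finset.sum_eq_zero fun k hk => ?_
    exact coeff_a_zero (by have := (Finset.mem_Ico.mp hk).1; omega)
  rw [h2, add_zero]

lemma coeff_SB_stab (n N K : ℕ) (h : N ≤ K) :
    PowerSeries.coeff (R := ℚ) N (SB n K) = PowerSeries.coeff (R := ℚ) N (SB n N) := by
  unfold SB
  rw [Finset.range_eq_Ico, ← Finset.sum_Ico_consecutive _ (by omega : 0 ≤ N + 1)
    (by omega : N + 1 ≤ K + 1), map_add, ← Finset.range_eq_Ico]
  have h2 : PowerSeries.coeff (R := ℚ) N (∑ k ∈ Finset.Ico (N + 1) (K + 1), b n k) = 0 := by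
    rw [map_sum]
    refine Finset.sum_eq_zero fun k hk => ?_
    exact coeff_b_zero (by have := (Finset.mem_Ico.mp hk).1; omega)
  rw [h2, add_zero]

/-! ### Base case -/

lemma keyR {K : Type*} [Field K] (F y : K) (hy : 1 - y ≠ 0) :
    F * (1 - y)⁻¹ = F + y * (F * (1 - y)⁻¹) := by
  linear_combination F * mul_inv_cancel₀ hy

lemma removal (f : PS) {m N : ℕ} (h : N < m) :
    PowerSeries.coeff (R := ℚ) N (f * (1 - PowerSeries.X ^ m)⁻¹) = PowerSeries.coeff (R := ℚ) N f := by
  have hm : m ≠ 0 := by omega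
  have key : f * (1 - PowerSeries.X ^ m)⁻¹ =
      f + PowerSeries.X ^ m * (f * (1 - PowerSeries.X ^ m)⁻¹) := by
    apply φ_inj
    simp only [map_add, map_mul, map_pow, φ_inv_osx m hm]
    exact keyR (φ f) (φ PowerSeries.X ^ m) (φ_osx_ne m hm)
  rw [key, map_add, coeff_killed _ h, add_zero]

lemma keyT {K : Type*} [Field K] (y Qa : K) (hQ : Qa ≠ 0) (hy : 1 - y ≠ 0) :
    Qa⁻¹ + y * (Qa * (1 - y))⁻¹ = (Qa * (1 - y))⁻¹ := by
  rw [mul_inv]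
  linear_combination (-(Qa⁻¹)) * mul_inv_cancel₀ hy

lemma qp_inv_telescope (K : ℕ) :
    ∑ k ∈ Finset.range (K + 1), PowerSeries.X ^ k * (qp k)⁻¹ = (qp K)⁻¹ := by
  induction K with
  | zero => simp
  | succ K IH =>
    rw [Finset.sum_range_succ, IH]
    apply φ_inj
    simp only [map_add, map_mul, map_pow, φ_inv_qp]
    rw [φ_qp_succ K]
    exact keyT (φ PowerSeries.X ^ (K + 1)) (φ (qp K)) (φ_qp_ne K) (φ_osx_ne (K + 1) (by omega))

lemma inv_qp_succ (N : ℕ) :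
    (qp (N + 1))⁻¹ = (qp N)⁻¹ * (1 - PowerSeries.X ^ (N + 1))⁻¹ := by
  rw [qp_succ]
  exact inv_split (cc_qp N) (cc_osx _ (by omega))

lemma coeff_qp_inv_stable (N : ℕ) : ∀ j, N ≤ j →
    PowerSeries.coeff (R := ℚ) N ((qp j)⁻¹) = PowerSeries.coeff (R := ℚ) N ((qp N)⁻¹) := by
  intro j
  induction j with
  | zero =>
    intro h
    have hN : N = 0 := by omega
    subst hN
    rfl
  | succ j IH =>
    intro h
    rcases Nat.lt_or_ge N (j + 1) with h1 | h2
    · rw [inv_qp_succ j, removal _ (by omega : N < j + 1), IH (by omega)]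
    · have : N = j + 1 := by omega
      rw [this]

lemma base (N n : ℕ) (h : N < n) :
    PowerSeries.coeff (R := ℚ) N (SA n N) = PowerSeries.coeff (R := ℚ) N (SB n N) := by
  have hA : PowerSeries.coeff (R := ℚ) N (SA n N) = PowerSeries.coeff (R := ℚ) N ((qp N)⁻¹) := by
    unfold SA
    rw [map_sum]
    have step : ∀ k ∈ Finset.range (N + 1),
        PowerSeries.coeff (R := ℚ) N (a n k) =
          PowerSeries.coeff (R := ℚ) N (PowerSeries.X ^ k * (qp k)⁻¹) := by
      intro k _
      unfold a
      rw [inv_split (cc_qp k) (cc_osx _ (by omega)), ← mul_assoc]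
      exact removal _ (by omega)
    rw [Finset.sum_congr rfl step, ← map_sum, qp_inv_telescope]
  have hB : PowerSeries.coeff (R := ℚ) N (SB n N) = PowerSeries.coeff (R := ℚ) N ((qp N)⁻¹) := by
    unfold SB
    rw [Finset.sum_range_succ', map_add]
    have h1 : PowerSeries.coeff (R := ℚ) N (∑ k ∈ Finset.range N, b n (k + 1)) = 0 := by
      rw [map_sum]
      refine Finset.sum_eq_zero fun k _ => ?_
      refine coeff_killed _ ?_
      have : n + (k + 1) + 1 ≤ (k + 1) * (n + (k + 1) + 1) :=
        Nat.le_mul_of_pos_left _ (by omega)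
      omega
    rw [h1, zero_add]
    unfold b
    rw [show (0 : ℕ) * (n + 0 + 1) = 0 by omega, show n + 0 = n by omega, pow_zero, one_mul,
      qp_zero, one_mul, inv_split (cc_qp n) (cc_osx _ (by omega)), removal _ h,
      coeff_qp_inv_stable N n (by omega)]
  rw [hA, hB]

/-! ### The main double induction -/

theorem Phi (N : ℕ) : ∀ n, 1 ≤ n →
    PowerSeries.coeff (R := ℚ) N (SA n N) = PowerSeries.coeff (R := ℚ) N (SB n N) := by
  induction N using Nat.strong_induction_on with
  | _ N IH =>
  have Hsmall : ∀ j, j < N → ∀ n, 1 ≤ n → ∀ K, j ≤ K →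
      PowerSeries.coeff (R := ℚ) j (SA n K) = PowerSeries.coeff (R := ℚ) j (SB n K) := by
    intro j hj n hn K hK
    rw [coeff_SA_stab n j K hK, coeff_SB_stab n j K hK, IH j hj n hn]
  have cross : ∀ m n, 1 ≤ m → 1 ≤ n →
      PowerSeries.coeff (R := ℚ) N (PowerSeries.X ^ m * SA n N) =
        PowerSeries.coeff (R := ℚ) N (PowerSeries.X ^ m * SB n N) := by
    intro m n hm hn
    rcases Nat.lt_or_ge N m with h | h
    · rw [coeff_killed _ h, coeff_killed _ h]
    · rw [coeff_shift _ h, coeff_shift _ h]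
      exact Hsmall (N - m) (by omega) n hn N (by omega)
  suffices H : ∀ d n, 1 ≤ n → N < n + d →
      PowerSeries.coeff (R := ℚ) N (SA n N) = PowerSeries.coeff (R := ℚ) N (SB n N) by
    intro n hn
    exact H (N + 1) n hn (by omega)
  intro d
  induction d with
  | zero =>
    intro n hn hlt
    exact base N n (by omega)
  | succ d IHd =>
    intro n hn hlt
    rcases Nat.lt_or_ge N n with hc | hc
    · exact base N n hc
    · have hA := congrArg (PowerSeries.coeff (R := ℚ) N) (sumrecA n N hn)
      have hB := congrArg (PowerSeries.coeff (R := ℚ) N) (sumrecB n N hn)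
      simp only [map_add] at hA hB
      have e1 : PowerSeries.coeff (R := ℚ) N (ga n (N + 1)) = 0 :=
        coeff_killed _ (by omega)
      have e2 : PowerSeries.coeff (R := ℚ) N (gb n (N + 1)) = 0 := by
        refine coeff_killed _ ?_
        have : N + 1 ≤ (N + 1) * (n + (N + 1) + 1) := Nat.le_mul_of_pos_right _ (by omega)
        omega
      have e3 := cross (n + 1) (n + 1) (by omega) (by omega)
      have e4 := cross n n hn hn
      have e5 := cross (n + 2) (n + 2) (by omega) (by omega)
      have e6 : PowerSeries.coeff (R := ℚ) N (SA (n + 1) N) =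
          PowerSeries.coeff (R := ℚ) N (SB (n + 1) N) := IHd (n + 1) (by omega) (by omega)
      linarith [hA, hB, e1, e2, e3, e4, e5, e6]


/-! ### Bridging lemmas to the original statement -/

lemma Lterm_eq (t u k : ℕ) :
    (PowerSeries.X : PS) ^ (u + k) * (qp (t + 1 + (u + k)))⁻¹ *
      qbinom (t + 1 + (u + k) - 1) (u + k - u) =
    PowerSeries.X ^ u * ((qp (t + u))⁻¹ * a (t + u + 1) k) := by
  rw [show t + 1 + (u + k) - 1 = t + u + k by omega, show u + k - u = k by omega,
    show t + 1 + (u + k) = t + u + k + 1 by omega]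
  unfold qbinom
  rw [if_pos (by omega : k ≤ t + u + k), show t + u + k - k = t + u by omega]
  unfold a
  rw [show t + u + 1 + k = t + u + k + 1 by omega, qp_succ (t + u + k)]
  apply φ_inj
  simp only [map_add, map_mul, map_sub, map_one, map_pow]
  rw [φ_inv_qp k, φ_inv_qp (t + u),
    φ_invc (qp (t + u + k) * (1 - PowerSeries.X ^ (t + u + k + 1)))
      (cc_prod (cc_qp (t + u + k)) (cc_osx _ (by omega))),
    φ_invc (qp k * (1 - PowerSeries.X ^ (t + u + k + 1)))
      (cc_prod (cc_qp k) (cc_osx _ (by omega)))]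
  simp only [map_mul, map_sub, map_one, map_pow, mul_inv]
  rw [pow_add (φ PowerSeries.X) u k]
  linear_combination (φ PowerSeries.X ^ u * φ PowerSeries.X ^ k * (φ (qp k))⁻¹ *
    (φ (qp (t + u)))⁻¹ * ((1 : FK) - φ PowerSeries.X ^ (t + u + k + 1))⁻¹) *
    mul_inv_cancel₀ (φ_qp_ne (t + u + k))

lemma Rterm_eq (t u k : ℕ) :
    (PowerSeries.X : PS) ^ ((u + k - u) * (t + 1 + (u + k)) + (u + k)) *
      ((qp (t + 1 + (u + k)))⁻¹) ^ 2 * qbinom (t + 1 + (u + k) - 1) (u + k - u) =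
    PowerSeries.X ^ u * ((qp (t + u))⁻¹ * b (t + u + 1) k) := by
  rw [show t + 1 + (u + k) - 1 = t + u + k by omega, show u + k - u = k by omega,
    show k * (t + 1 + (u + k)) + (u + k) = u + (k * (t + u + k + 1) + k) by ring,
    show t + 1 + (u + k) = t + u + k + 1 by omega]
  unfold qbinom
  rw [if_pos (by omega : k ≤ t + u + k), show t + u + k - k = t + u by omega]
  unfold b
  rw [show k * (t + u + 1 + k + 1) = k * (t + u + k + 1) + k by ring,
    show t + u + 1 + k = t + u + k + 1 by omega, qp_succ (t + u + k)]
  apply φ_inj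
  simp only [map_add, map_mul, map_sub, map_one, map_pow]
  rw [φ_inv_qp k, φ_inv_qp (t + u),
    φ_invc (qp k * (qp (t + u + k) * (1 - PowerSeries.X ^ (t + u + k + 1))) *
        (1 - PowerSeries.X ^ (t + u + k + 1)))
      (cc_prod (cc_prod (cc_qp k) (cc_prod (cc_qp (t + u + k)) (cc_osx _ (by omega))))
        (cc_osx _ (by omega))),
    φ_invc (qp (t + u + k) * (1 - PowerSeries.X ^ (t + u + k + 1)))
      (cc_prod (cc_qp (t + u + k)) (cc_osx _ (by omega)))]
  simp only [map_mul, map_sub, map_one, map_pow, mul_inv]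
  rw [pow_add (φ PowerSeries.X) u (k * (t + u + k + 1) + k),
    pow_add (φ PowerSeries.X) (k * (t + u + k + 1)) k]
  linear_combination (φ PowerSeries.X ^ u * φ PowerSeries.X ^ (k * (t + u + k + 1)) *
    φ PowerSeries.X ^ k * (φ (qp k))⁻¹ * (φ (qp (t + u)))⁻¹ * (φ (qp (t + u + k)))⁻¹ *
    ((1 : FK) - φ PowerSeries.X ^ (t + u + k + 1))⁻¹ *
    ((1 : FK) - φ PowerSeries.X ^ (t + u + k + 1))⁻¹) *
    mul_inv_cancel₀ (φ_qp_ne (t + u + k))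

end QVC

theorem q_vandermonde_convolution (s : ℕ) (hs : 0 < s) (u N M : ℕ) (hNM : N ≤ M) :
    (PowerSeries.coeff (R := ℚ) N)
        (∑ m ∈ Finset.Icc u M,
          (PowerSeries.X : PowerSeries ℚ) ^ m * (qp (s + m))⁻¹ * qbinom (s + m - 1) (m - u)) =
      (PowerSeries.coeff (R := ℚ) N)
        (∑ m ∈ Finset.Icc u M,
          (PowerSeries.X : PowerSeries ℚ) ^ ((m - u) * (s + m) + m) * ((qp (s + m))⁻¹) ^ 2 *
            qbinom (s + m - 1) (m - u)) := by
  classical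
  obtain ⟨t, rfl⟩ : ∃ t, s = t + 1 := ⟨s - 1, by omega⟩
  rcases Nat.lt_or_ge M u with hu | hu
  · rw [Finset.Icc_eq_empty (by omega)]
    simp
  · rw [← Finset.Ico_add_one_right_eq_Icc, Finset.sum_Ico_eq_sum_range, Finset.sum_Ico_eq_sum_range,
      show M + 1 - u = (M - u) + 1 by omega]
    have congrL : (∑ i ∈ Finset.range (M - u + 1),
        ((PowerSeries.X : PowerSeries ℚ) ^ (u + i) * (qp (t + 1 + (u + i)))⁻¹ *
          qbinom (t + 1 + (u + i) - 1) (u + i - u))) =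
        PowerSeries.X ^ u * ((qp (t + u))⁻¹ * QVC.SA (t + u + 1) (M - u)) := by
      rw [Finset.sum_congr rfl fun i _ => QVC.Lterm_eq t u i, ← Finset.mul_sum,
        ← Finset.mul_sum]
      rfl
    have congrR : (∑ i ∈ Finset.range (M - u + 1),
        ((PowerSeries.X : PowerSeries ℚ) ^ ((u + i - u) * (t + 1 + (u + i)) + (u + i)) *
          ((qp (t + 1 + (u + i)))⁻¹) ^ 2 * qbinom (t + 1 + (u + i) - 1) (u + i - u))) =
        PowerSeries.X ^ u * ((qp (t + u))⁻¹ * QVC.SB (t + u + 1) (M - u)) := by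
      rw [Finset.sum_congr rfl fun i _ => QVC.Rterm_eq t u i, ← Finset.mul_sum,
        ← Finset.mul_sum]
      rfl
    rw [congrL, congrR]
    rcases Nat.lt_or_ge N u with hNu | hNu
    · rw [QVC.coeff_killed _ hNu, QVC.coeff_killed _ hNu]
    · rw [QVC.coeff_shift _ hNu, QVC.coeff_shift _ hNu, PowerSeries.coeff_mul,
        PowerSeries.coeff_mul]
      refine Finset.sum_congr rfl fun p hp => ?_
      have hp2 : p.2 ≤ N - u := by
        have := Finset.HasAntidiagonal.mem_antidiagonal.mp hp
        omega
      have hK : p.2 ≤ M - u := by omega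
      rw [QVC.coeff_SA_stab _ _ _ hK, QVC.coeff_SB_stab _ _ _ hK,
        QVC.Phi p.2 (t + u + 1) (by omega)]
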